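/- Let k be a field, n a positive integer, and σ ∈ Equiv.Perm (Fin n) an n-cycle (i.e. σ is a cycle whose support is all of Fin n). Let g be an n×n matrix over k that is monomial with permutation σ (that is, g i j ≠ 0 if and only if i = σ j) and suppose det g = 1. Then g^n = (−1)^{n−1} • 1, i.e. g^n is the identity matrix if n is odd and minus the identity matrix if n is even. -/

import Mathlib

/-- A square matrix `g` is monomial with permutation `σ` if `g i j ≠ 0` exactly when
`i = σ j`. -/
def Matrix.IsMonomialWith {k : Type*} [Field k] {ι : Type*}
    (g : Matrix ι ι k) (σ : Equiv.Perm ι) : Prop :=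
  ∀ i j, g i j ≠ 0 ↔ i = σ j

theorem monomial_pow_formula {k : Type*} [Field k] {n : ℕ} (σ : Equiv.Perm (Fin n))
    (g : Matrix (Fin n) (Fin n) k) (hg : g.IsMonomialWith σ) (m : ℕ) :
    g ^ m = Matrix.of (fun i j => if i = (σ ^ m) j then
      ∏ t ∈ Finset.range m, g (σ ((σ ^ t) j)) ((σ ^ t) j) else 0) := by
  induction m with
  | zero =>
    ext i j
    simp [Matrix.one_apply, eq_comm]
  | succ m ih =>
    rw [pow_succ, ih]
    ext i j
    rw [Matrix.mul_apply]
    rw [Finset.sum_eq_single (σ j)]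
    · by_cases h : i = (σ ^ (m + 1)) j
      · have h2 : i = (σ ^ m) (σ j) := by
          rw [h, pow_succ]; rfl
        simp only [Matrix.of_apply, if_pos h, if_pos h2]
        rw [Finset.prod_range_succ']
        simp only [pow_zero, Equiv.Perm.one_apply]
        congr 1
      · have h2 : i ≠ (σ ^ m) (σ j) := by
          intro hc; apply h; rw [hc, pow_succ]; rfl
        simp [h, h2]
    · intro b _ hb
      have : g b j = 0 := by
        by_contra hc
        exact hb ((hg b j).mp hc)
      simp [this]
    · simp

theorem monomial_coxeter_pow_eq
    (k : Type*) [Field k] (n : ℕ) (hn : 0 < n) (σ : Equiv.Perm (Fin n))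
    (hσc : σ.IsCycle) (hσs : σ.support = Finset.univ)
    (g : Matrix (Fin n) (Fin n) k) (hg : g.IsMonomialWith σ) (hdet : g.det = 1) :
    g ^ n = ((-1 : k) ^ (n - 1)) • (1 : Matrix (Fin n) (Fin n) k) := by
  set c : Fin n → k := fun j => g (σ j) j with hc
  have hmove : ∀ x : Fin n, σ x ≠ x := by
    intro x
    have : x ∈ σ.support := by rw [hσs]; exact Finset.mem_univ x
    exact Equiv.Perm.mem_support.mp this
  have hcard : σ.support.card = n := by rw [hσs]; simp
  have horder : orderOf σ = n := by rw [hσc.orderOf, hcard]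
  have hσn : σ ^ n = 1 := by simpa [horder] using pow_orderOf_eq_one σ
  -- factorization g = permMatrix σ⁻¹ * diagonal c
  have hfac : g = (σ⁻¹.permMatrix k) * Matrix.diagonal c := by
    ext i j
    rw [Matrix.mul_apply, Finset.sum_eq_single j]
    · by_cases h : i = σ j
      · simp [Equiv.Perm.permMatrix, PEquiv.toMatrix, Equiv.toPEquiv, Option.mem_def,
          h, hc, Matrix.diagonal]
      · have h0 : g i j = 0 := by
          by_contra hcon; exact h ((hg i j).mp hcon)
        have h1 : σ⁻¹ i ≠ j := fun hcon => h (by rw [← hcon]; simp)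
        simp [Equiv.Perm.permMatrix, PEquiv.toMatrix, Equiv.toPEquiv, Option.mem_def,
          h0, h1, Matrix.diagonal]
        exact fun hcon => absurd hcon h1
    · intro b _ hb
      simp [Matrix.diagonal, hb]
    · simp
  -- sign computation
  have hsign : ((Equiv.Perm.sign σ : ℤ) : k) = (-1 : k) ^ (n - 1) := by
    rw [hσc.sign, hcard]
    obtain ⟨m, rfl⟩ := Nat.exists_eq_succ_of_ne_zero hn.ne'
    push_cast
    simp [pow_succ]
  have hprod : ∏ j, c j = (-1 : k) ^ (n - 1) := by
    have hd : g.det = ((Equiv.Perm.sign σ : ℤ) : k) * ∏ j, c j := by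
      rw [hfac, Matrix.det_mul, Matrix.det_permutation, Matrix.det_diagonal]
      congr 2
      simp
    rw [hdet, hsign] at hd
    have hsq : (-1 : k) ^ (n - 1) * (-1 : k) ^ (n - 1) = 1 := by
      rw [← pow_add, ← two_mul, pow_mul]; norm_num
    calc ∏ j, c j = ((-1 : k) ^ (n-1) * (-1:k)^(n-1)) * ∏ j, c j := by rw [hsq, one_mul]
      _ = (-1:k)^(n-1) * ((-1:k)^(n-1) * ∏ j, c j) := by ring
      _ = (-1:k)^(n-1) := by rw [← hd, mul_one]
  -- orbit product
  have horbit : ∀ j : Fin n, ∏ t ∈ Finset.range n, c ((σ ^ t) j) = ∏ i, c i := by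
    intro j
    have key : ∀ a b : ℕ, a < n → b < n → a ≤ b → (σ ^ a) j = (σ ^ b) j → a = b := by
      intro a b ha hb hab heq
      have h1 : (σ ^ (b - a)) ((σ ^ a) j) = (σ ^ a) j := by
        rw [← Equiv.Perm.mul_apply, ← pow_add, Nat.sub_add_cancel hab, ← heq]
      have hfix : σ ^ (b - a) = 1 :=
        (hσc.pow_eq_one_iff' (hmove ((σ ^ a) j))).mpr h1
      have hdvd : n ∣ b - a := by
        have := orderOf_dvd_of_pow_eq_one hfix
        rwa [horder] at this
      by_contra hne
      have hpos : 0 < b - a := by omega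
      have := Nat.le_of_dvd hpos hdvd
      omega
    apply Finset.prod_nbij (fun t => (σ ^ t) j)
    · intro t _; simp
    · intro a ha b hb hab
      simp only [Finset.coe_range, Set.mem_Iio] at ha hb
      simp only at hab
      rcases le_total a b with h | h
      · exact key a b ha hb h hab
      · exact (key b a hb ha h hab.symm).symm
    · intro i _
      obtain ⟨t, ht⟩ := hσc.exists_pow_eq (hmove j) (hmove i)
      refine ⟨t % n, ?_, ?_⟩
      · simp [Nat.mod_lt _ hn]
      · show (σ ^ (t % n)) j = i
        have hpow : σ ^ t = σ ^ (t % n) := by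
          conv_lhs => rw [← Nat.mod_add_div t n, pow_add, pow_mul, hσn, one_pow, mul_one]
        rw [← hpow]; exact ht
    · intro t _; rfl
  rw [monomial_pow_formula σ g hg n]
  ext i j
  by_cases h : i = j
  · have h2 : i = (σ ^ n) j := by rw [hσn, h]; rfl
    simp only [Matrix.of_apply, if_pos h2, Matrix.smul_apply, Matrix.one_apply, if_pos h,
      smul_eq_mul, mul_one]
    rw [show (∏ t ∈ Finset.range n, g (σ ((σ ^ t) j)) ((σ ^ t) j)) =
      ∏ t ∈ Finset.range n, c ((σ ^ t) j) from rfl, horbit, hprod]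
  · have h2 : i ≠ (σ ^ n) j := by rw [hσn]; simpa using h
    simp [h, h2]
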